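/- If an m×n grid with m ≥ 2 admits a non-attacking tree configuration with exactly c trees in each column and exactly r trees in each row, then n ≥ 4r. -/

import Mathlib

def ParksAdj (p q : ℕ × ℕ) : Prop :=
  p ≠ q ∧ ((p.1 : ℤ) - q.1).natAbs ≤ 1 ∧ ((p.2 : ℤ) - q.2).natAbs ≤ 1

lemma parks_key (m n r : ℕ) (hm : 2 ≤ m) (T : Finset (ℕ × ℕ))
    (hgrid : ∀ p ∈ T, p.1 < m ∧ p.2 < n)
    (hrow : ∀ i < m, (T.filter (fun p => p.1 = i)).card = r)
    (hna : ∀ p ∈ T, ∀ q ∈ T, ¬ ParksAdj p q)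
    (t : ℕ × ℕ) (ht : t ∈ T) :
    ∃ C : Finset ℕ, C.card = 2 * r ∧ t.2 ∈ C ∧ (∀ a ∈ C, a < n) ∧
      ∀ a ∈ C, ∀ b ∈ C, a ≠ b → 2 ≤ ((a : ℤ) - b).natAbs := by
  set i := t.1 with hi
  have him : i < m := (hgrid t ht).1
  set i' := if i + 1 < m then i + 1 else i - 1 with hi'
  have hii' : i' < m ∧ i' ≠ i ∧ ((i : ℤ) - i').natAbs ≤ 1 := by
    rw [hi']; split <;> omega
  set S := T.filter (fun p => p.1 = i ∨ p.1 = i') with hS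
  -- any two points of S have row distance ≤ 1
  have hrowdist : ∀ p ∈ S, ∀ q ∈ S, ((p.1 : ℤ) - q.1).natAbs ≤ 1 := by
    intro p hp q hq
    obtain ⟨_, hp2⟩ := Finset.mem_filter.mp hp
    obtain ⟨_, hq2⟩ := Finset.mem_filter.mp hq
    rcases hp2 with h1 | h1 <;> rcases hq2 with h2 | h2 <;> rw [h1, h2] <;> omega
  have hScard : S.card = 2 * r := by
    rw [hS, Finset.filter_or, Finset.card_union_of_disjoint, hrow i him,
      hrow i' hii'.1]
    · ring
    · rw [Finset.disjoint_left]
      intro p hp hq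
      exact hii'.2.1 (by rw [← (Finset.mem_filter.mp hq).2, (Finset.mem_filter.mp hp).2])
  refine ⟨S.image Prod.snd, ?_, ?_, ?_, ?_⟩
  · rw [Finset.card_image_of_injOn, hScard]
    intro p hp q hq hpq
    by_contra hne
    exact hna p (Finset.mem_filter.mp hp).1 q (Finset.mem_filter.mp hq).1
      ⟨hne, hrowdist p hp q hq, by omega⟩
  · exact Finset.mem_image.mpr ⟨t, Finset.mem_filter.mpr ⟨ht, Or.inl rfl⟩, rfl⟩
  · intro a ha
    obtain ⟨p, hp, rfl⟩ := Finset.mem_image.mp ha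
    exact (hgrid p (Finset.mem_filter.mp hp).1).2
  · intro a ha b hb hab
    obtain ⟨p, hp, rfl⟩ := Finset.mem_image.mp ha
    obtain ⟨q, hq, rfl⟩ := Finset.mem_image.mp hb
    by_contra hlt
    exact hna p (Finset.mem_filter.mp hp).1 q (Finset.mem_filter.mp hq).1
      ⟨fun h => hab (by rw [h]), hrowdist p hp q hq, by omega⟩

/-- If an m×n grid with m ≥ 2 admits a non-attacking configuration with exactly `c`
trees per column and `r` trees per row (r ≥ 1), then n ≥ 4r. -/
theorem stmt_2 (m n c r : ℕ) (hm : 2 ≤ m) (hr : 1 ≤ r) (T : Finset (ℕ × ℕ))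
    (hgrid : ∀ p ∈ T, p.1 < m ∧ p.2 < n)
    (hrow : ∀ i < m, (T.filter (fun p => p.1 = i)).card = r)
    (hcol : ∀ j < n, (T.filter (fun p => p.2 = j)).card = c)
    (hna : ∀ p ∈ T, ∀ q ∈ T, ¬ ParksAdj p q) :
    4 * r ≤ n := by
  -- row 0 is nonempty, get a tree t0
  have h0 : (T.filter (fun p => p.1 = 0)).Nonempty := by
    rw [← Finset.card_pos, hrow 0 (by omega)]; omega
  obtain ⟨t0, ht0⟩ := h0
  have ht0T : t0 ∈ T := (Finset.mem_filter.mp ht0).1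
  -- n ≥ 2
  obtain ⟨C0, hC0card, _, hC0lt, _⟩ := parks_key m n r hm T hgrid hrow hna t0 ht0T
  have hn2 : 2 ≤ n := by
    have hsub : C0 ⊆ Finset.range n := fun a ha => Finset.mem_range.mpr (hC0lt a ha)
    have := Finset.card_le_card hsub
    rw [hC0card, Finset.card_range] at this
    omega
  -- c ≥ 1
  have hc1 : 1 ≤ c := by
    have := hcol t0.2 (hgrid t0 ht0T).2
    have hmem : t0 ∈ T.filter (fun p => p.2 = t0.2) := Finset.mem_filter.mpr ⟨ht0T, rfl⟩
    have := Finset.card_pos.mpr ⟨t0, hmem⟩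
    omega
  -- column 1 has a tree t1
  have h1 : (T.filter (fun p => p.2 = 1)).Nonempty := by
    rw [← Finset.card_pos, hcol 1 (by omega)]; omega
  obtain ⟨t1, ht1⟩ := h1
  have ht1T : t1 ∈ T := (Finset.mem_filter.mp ht1).1
  have ht1c : t1.2 = 1 := (Finset.mem_filter.mp ht1).2
  obtain ⟨C, hCcard, hC1, hClt, hCgap⟩ := parks_key m n r hm T hgrid hrow hna t1 ht1T
  rw [ht1c] at hC1
  -- every element of C is ≥ 1
  have hCpos : ∀ a ∈ C, 1 ≤ a := by
    intro a ha
    by_contra h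
    have ha0 : a = 0 := by omega
    have := hCgap a ha 1 hC1 (by omega)
    omega
  -- blocks {a, a+1} are pairwise disjoint, contained in Ico 1 (n+1)
  set U := C.biUnion (fun a => ({a, a + 1} : Finset ℕ)) with hU
  have hUcard : U.card = 4 * r := by
    rw [hU, Finset.card_biUnion]
    · have : ∀ a ∈ C, ({a, a + 1} : Finset ℕ).card = 2 := by
        intro a _
        rw [Finset.card_insert_of_notMem (by simp), Finset.card_singleton]
      rw [Finset.sum_congr rfl this, Finset.sum_const, hCcard]
      ring
    · intro a ha b hb hab
      have := hCgap a ha b hb hab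
      rw [Function.onFun, Finset.disjoint_left]
      intro x hx hx'
      simp only [Finset.mem_insert, Finset.mem_singleton] at hx hx'
      omega
  have hUsub : U ⊆ Finset.Ico 1 (n + 1) := by
    intro x hx
    rw [hU, Finset.mem_biUnion] at hx
    obtain ⟨a, ha, hxa⟩ := hx
    simp only [Finset.mem_insert, Finset.mem_singleton] at hxa
    have h1 := hCpos a ha
    have h2 := hClt a ha
    rw [Finset.mem_Ico]
    omega
  have := Finset.card_le_card hUsub
  rw [hUcard, Nat.card_Ico] at this
  omega
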